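/- Let α ∈ ℝ be such that 1, α, α² are linearly independent over ℚ. Let a, b, c, d ∈ ℤ with d ≠ 0 and c + α·d ≠ 0, and set θ = (a + α·b)/(c + α·d); assume θ is irrational. Then the point (0, 0) belongs to the interior (in ℝ²) of the closure of the set {(⟨α·n⟩, ⟨α·⌊θ·n⌉⟩) : n ∈ ℤ}. -/

import Mathlib

/-!
STATEMENT 8: (0,0) lies in the interior of the closure of
{(⟨α·n⟩, ⟨α·⌊θ·n⌉⟩) : n ∈ ℤ}.
-/

namespace Stmt8

/-- The signed fractional part `⟨x⟩ = x - ⌊x⌉ ∈ [-1/2, 1/2)`. -/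
noncomputable def sfrac (x : ℝ) : ℝ := x - round x


open MeasureTheory Complex Set Submodule Algebra
open scoped Real

attribute [local instance] ZeroLEOneClass.factZeroLtOne

noncomputable def char (mn : ℤ × ℤ) : C(AddCircle (1:ℝ) × AddCircle (1:ℝ), ℂ) :=
  ((fourier mn.1).comp (ContinuousMap.fst)) * ((fourier mn.2).comp (ContinuousMap.snd))

lemma char_apply (mn : ℤ × ℤ) (x : AddCircle (1:ℝ) × AddCircle (1:ℝ)) :
    char mn x = fourier mn.1 x.1 * fourier mn.2 x.2 := rfl

lemma fourier_add_arg {m : ℤ} {x y : AddCircle (1:ℝ)} :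
    fourier m (x + y) = fourier m x * fourier m y := by
  simp only [fourier_apply, smul_add, AddCircle.toCircle_add, Circle.coe_mul]

lemma char_add_arg (mn : ℤ × ℤ) (x y : AddCircle (1:ℝ) × AddCircle (1:ℝ)) :
    char mn (x + y) = char mn x * char mn y := by
  simp only [char_apply, Prod.fst_add, Prod.snd_add, fourier_add_arg]; ring

lemma char_zero_eq_one : char (0,0) = 1 := by
  ext z; simp [char_apply, fourier_zero]

lemma char_mul (mn mn' : ℤ × ℤ) : char mn * char mn' = char (mn + mn') := by
  ext z
  simp only [char_apply, ContinuousMap.mul_apply, Prod.fst_add, Prod.snd_add, fourier_add]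
  ring

noncomputable def charSubalgebra : StarSubalgebra ℂ C(AddCircle (1:ℝ) × AddCircle (1:ℝ), ℂ) where
  toSubalgebra := Algebra.adjoin ℂ (range char)
  star_mem' := by
    show Algebra.adjoin ℂ (range char) ≤ star (Algebra.adjoin ℂ (range char))
    refine adjoin_le ?_
    rintro - ⟨mn, rfl⟩
    refine subset_adjoin ⟨(-mn.1, -mn.2), ?_⟩
    ext z
    simp [char_apply, fourier_neg]

lemma charSubalgebra_coe :
    Subalgebra.toSubmodule charSubalgebra.toSubalgebra = span ℂ (range char) := by
  apply adjoin_eq_span_of_subset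
  refine Subset.trans ?_ Submodule.subset_span
  intro x hx
  refine Submonoid.closure_induction (fun _ => id) ⟨(0,0), char_zero_eq_one⟩ ?_ hx
  rintro - - - - ⟨mn, rfl⟩ ⟨mn', rfl⟩
  exact ⟨mn + mn', (char_mul mn mn').symm⟩

lemma charSubalgebra_separatesPoints : charSubalgebra.SeparatesPoints := by
  intro x y hxy
  rcases Prod.ext_iff.not.mp hxy |> not_and_or.mp with h | h
  · refine ⟨_, ⟨char (1,0), subset_adjoin ⟨(1,0), rfl⟩, rfl⟩, ?_⟩
    dsimp only
    simp only [char_apply, fourier_zero, mul_one, fourier_one]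
    intro hc
    rw [Circle.coe_inj] at hc
    exact h (AddCircle.injective_toCircle one_ne_zero hc)
  · refine ⟨_, ⟨char (0,1), subset_adjoin ⟨(0,1), rfl⟩, rfl⟩, ?_⟩
    dsimp only
    simp only [char_apply, fourier_zero, one_mul, fourier_one]
    intro hc
    rw [Circle.coe_inj] at hc
    exact h (AddCircle.injective_toCircle one_ne_zero hc)

lemma charSubalgebra_closure_eq_top : charSubalgebra.topologicalClosure = ⊤ :=
  ContinuousMap.starSubalgebra_topologicalClosure_eq_top_of_separatesPoints charSubalgebra
    charSubalgebra_separatesPoints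

lemma span_char_closure_eq_top : (span ℂ (range char)).topologicalClosure = ⊤ := by
  rw [← charSubalgebra_coe]
  exact congr_arg (Subalgebra.toSubmodule <| StarSubalgebra.toSubalgebra ·)
    charSubalgebra_closure_eq_top

lemma integral_char_eq_zero' {G : Type*} [AddCommGroup G] [TopologicalSpace G]
    [IsTopologicalAddGroup G] [MeasurableSpace G] [BorelSpace G]
    (μ : Measure G) [IsProbabilityMeasure μ] [μ.IsAddLeftInvariant]
    {χ : G → ℂ} (hmul : ∀ x y, χ (x + y) = χ x * χ y)
    {g : G} (hg : χ g ≠ 1) : ∫ x, χ x ∂μ = 0 := by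
  have h1 : ∫ x, χ (g + x) ∂μ = ∫ x, χ x ∂μ := integral_add_left_eq_self χ g
  simp only [hmul g] at h1
  rw [integral_const_mul] at h1
  have h2 : (χ g - 1) * ∫ x, χ x ∂μ = 0 := by ring_nf; linear_combination h1
  rcases mul_eq_zero.mp h2 with h | h
  · exact absurd (sub_eq_zero.mp h) hg
  · exact h

lemma exists_char_ne_one {mn : ℤ × ℤ} (h : mn ≠ (0,0)) :
    ∃ g : AddCircle (1:ℝ) × AddCircle (1:ℝ), char mn g ≠ 1 := by
  rcases Prod.ext_iff.not.mp h |> not_and_or.mp with hm | hn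
  · refine ⟨(((1/(2*(mn.1:ℝ))) : ℝ), (0 : AddCircle (1:ℝ))), ?_⟩
    rw [char_apply, fourier_eval_zero, mul_one, fourier_coe_apply]
    have hm' : (mn.1 : ℂ) ≠ 0 := Int.cast_ne_zero.mpr hm
    have harg : 2 * (π:ℂ) * I * (mn.1:ℂ) * ((1/(2*(mn.1:ℝ)) : ℝ):ℂ) / ((1:ℝ):ℂ) = π * I := by
      push_cast
      field_simp
    rw [harg, Complex.exp_pi_mul_I]
    norm_num
  · refine ⟨((0 : AddCircle (1:ℝ)), ((1/(2*(mn.2:ℝ))) : ℝ)), ?_⟩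
    rw [char_apply, fourier_eval_zero, one_mul, fourier_coe_apply]
    have hm' : (mn.2 : ℂ) ≠ 0 := Int.cast_ne_zero.mpr hn
    have harg : 2 * (π:ℂ) * I * (mn.2:ℂ) * ((1/(2*(mn.2:ℝ)) : ℝ):ℂ) / ((1:ℝ):ℂ) = π * I := by
      push_cast
      field_simp
    rw [harg, Complex.exp_pi_mul_I]
    norm_num



open MeasureTheory Complex Set Submodule Algebra
open scoped Real

attribute [local instance] ZeroLEOneClass.factZeroLtOne

set_option maxHeartbeats 2000000 in
set_option synthInstance.maxHeartbeats 400000 in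
theorem dense_torus_orbit (α β : ℝ)
    (hrel : ∀ m n p : ℤ, (m:ℝ) * α + (n:ℝ) * β = (p:ℝ) → m = 0 ∧ n = 0) :
    Dense ((AddSubgroup.zmultiples (((α:AddCircle (1:ℝ)), (β:AddCircle (1:ℝ))))
      : Set (AddCircle (1:ℝ) × AddCircle (1:ℝ)))) := by
  haveI : IsProbabilityMeasure (volume : Measure (AddCircle (1:ℝ))) :=
    ⟨by rw [AddCircle.measure_univ]; norm_num⟩
  haveI : IsProbabilityMeasure (volume : Measure (AddCircle (1:ℝ) × AddCircle (1:ℝ))) := by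
    rw [Measure.volume_eq_prod]; infer_instance
  haveI : (volume : Measure (AddCircle (1:ℝ) × AddCircle (1:ℝ))).IsAddLeftInvariant := by
    rw [Measure.volume_eq_prod]; infer_instance
  haveI : (volume : Measure (AddCircle (1:ℝ) × AddCircle (1:ℝ))).IsOpenPosMeasure := by
    rw [Measure.volume_eq_prod]; infer_instance
  by_contra hnd
  obtain ⟨p, hp⟩ : ∃ p : AddCircle (1:ℝ) × AddCircle (1:ℝ), p ∉ closure
      ((AddSubgroup.zmultiples (((α:AddCircle (1:ℝ)), (β:AddCircle (1:ℝ))))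
        : AddSubgroup (AddCircle (1:ℝ) × AddCircle (1:ℝ)))
        : Set (AddCircle (1:ℝ) × AddCircle (1:ℝ))) := by
    by_contra hc
    push_neg at hc
    exact hnd fun x => hc x
  set Γ : AddSubgroup (AddCircle (1:ℝ) × AddCircle (1:ℝ)) :=
    AddSubgroup.zmultiples (((α:AddCircle (1:ℝ)), (β:AddCircle (1:ℝ)))) with hΓ
  set C : AddSubgroup (AddCircle (1:ℝ) × AddCircle (1:ℝ)) := Γ.topologicalClosure with hCdef
  have hCset : (C : Set (AddCircle (1:ℝ) × AddCircle (1:ℝ))) = closure ↑Γ := rfl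
  have hCclosed : IsClosed (C : Set (AddCircle (1:ℝ) × AddCircle (1:ℝ))) := by
    rw [hCset]; exact isClosed_closure
  have hp' : p ∉ (C : Set (AddCircle (1:ℝ) × AddCircle (1:ℝ))) := by rw [hCset]; exact hp
  obtain ⟨f, hf0, hf1, hf01⟩ :=
    exists_continuous_zero_one_of_isClosed hCclosed isClosed_singleton
      (Set.disjoint_singleton_right.mpr hp')
  haveI : CompactSpace ↥C := isCompact_iff_compactSpace.mp hCclosed.isCompact
  haveI : BorelSpace ↥C := Subtype.borelSpace (C : Set (AddCircle (1:ℝ) × AddCircle (1:ℝ)))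
  set μC : Measure ↥C := Measure.addHaarMeasure ⊤ with hμC
  haveI : IsProbabilityMeasure μC :=
    ⟨by simpa using Measure.addHaarMeasure_self (K₀ := (⊤ : TopologicalSpace.PositiveCompacts ↥C))⟩
  set ι : ↥C → (AddCircle (1:ℝ) × AddCircle (1:ℝ)) := Subtype.val with hι'
  have hι : Continuous ι := continuous_subtype_val
  set μ1 : Measure (AddCircle (1:ℝ) × AddCircle (1:ℝ)) := μC.map ι with hμ1
  haveI : IsProbabilityMeasure μ1 := Measure.isProbabilityMeasure_map hι.measurable.aemeasurable
  have hmap : ∀ h : (AddCircle (1:ℝ) × AddCircle (1:ℝ)) → ℂ, Continuous h →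
      ∫ x, h x ∂μ1 = ∫ y, h (ι y) ∂μC := fun h hh =>
    integral_map hι.measurable.aemeasurable hh.aestronglyMeasurable
  have hξC : (((α:AddCircle (1:ℝ)), (β:AddCircle (1:ℝ)))) ∈ C :=
    Γ.le_topologicalClosure (AddSubgroup.mem_zmultiples _)
  have hχval : ∀ mn : ℤ × ℤ, char mn (((α:AddCircle (1:ℝ)), (β:AddCircle (1:ℝ)))) =
      Complex.exp (2 * (π:ℂ) * I * ((mn.1:ℂ) * (α:ℂ) + (mn.2:ℂ) * (β:ℂ))) := by
    intro mn
    simp only [char_apply, fourier_coe_apply, Complex.ofReal_one, div_one, ← Complex.exp_add]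
    congr 1
    ring
  -- the key identity
  have hkey : ∀ mn : ℤ × ℤ,
      ∫ x, char mn x ∂(volume : Measure (AddCircle (1:ℝ) × AddCircle (1:ℝ)))
        = ∫ x, char mn x ∂μ1 := by
    intro mn
    by_cases h0 : mn = (0,0)
    · subst h0
      rw [char_zero_eq_one]
      simp
    · have hL : ∫ x, char mn x ∂(volume : Measure (AddCircle (1:ℝ) × AddCircle (1:ℝ))) = 0 := by
        obtain ⟨g, hg⟩ := exists_char_ne_one h0
        exact integral_char_eq_zero' _ (char_add_arg mn) hg
      have hR : ∫ x, char mn x ∂μ1 = 0 := by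
        rw [hmap _ (char mn).continuous]
        by_cases htriv : ∀ y : ↥C, char mn (ι y) = 1
        · exfalso
          have h1 := htriv ⟨_, hξC⟩
          rw [hχval mn, Complex.exp_eq_one_iff] at h1
          obtain ⟨k, hk⟩ := h1
          have hne : (2 * (π:ℂ) * I) ≠ 0 := by
            simp [Real.pi_ne_zero, Complex.I_ne_zero]
          have h2c : ((mn.1:ℂ) * (α:ℂ) + (mn.2:ℂ) * (β:ℂ)) = (k:ℂ) := by
            apply mul_left_cancel₀ hne
            rw [hk]; ring
          have h2 : (mn.1:ℝ) * α + (mn.2:ℝ) * β = (k:ℝ) := by exact_mod_cast h2c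
          obtain ⟨hm, hn⟩ := hrel mn.1 mn.2 k h2
          exact h0 (Prod.ext hm hn)
        · push_neg at htriv
          obtain ⟨g, hg⟩ := htriv
          refine integral_char_eq_zero' μC ?_ hg
          intro x y
          show char mn (ι (x + y)) = _
          rw [show ι (x + y) = ι x + ι y from rfl]
          exact char_add_arg mn (ι x) (ι y)
      rw [hL, hR]
  -- Urysohn function, complexified
  set F : C(AddCircle (1:ℝ) × AddCircle (1:ℝ), ℂ) :=
    ⟨fun x => ((f x : ℝ) : ℂ), Complex.continuous_ofReal.comp f.continuous⟩ with hF
  have hFι : ∀ y : ↥C, F (ι y) = 0 := by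
    intro y
    show ((f (ι y) : ℝ) : ℂ) = 0
    rw [hf0 y.2]
    simp
  have hF1 : ∫ x, F x ∂μ1 = 0 := by
    rw [hmap _ F.continuous]
    simp only [hFι]
    simp
  have hint : ∀ (P : C(AddCircle (1:ℝ) × AddCircle (1:ℝ), ℂ))
      (ν : Measure (AddCircle (1:ℝ) × AddCircle (1:ℝ))) [IsFiniteMeasure ν],
      Integrable (⇑P) ν := fun P ν _ =>
    P.continuous.integrable_of_hasCompactSupport (HasCompactSupport.of_compactSpace _)
  have hPint : ∀ P ∈ span ℂ (range char),
      ∫ x, (P : C(AddCircle (1:ℝ) × AddCircle (1:ℝ), ℂ)) x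
        ∂(volume : Measure (AddCircle (1:ℝ) × AddCircle (1:ℝ))) = ∫ x, P x ∂μ1 := by
    intro P hP
    induction hP using Submodule.span_induction with
    | mem P hPm =>
        obtain ⟨mn, rfl⟩ := hPm
        exact hkey mn
    | zero => simp
    | add P Q hPs hQs hPi hQi =>
        rw [show ⇑(P + Q) = ⇑P + ⇑Q from rfl]
        simp only [Pi.add_apply]
        rw [integral_add (hint P _) (hint Q _), integral_add (hint P _) (hint Q _), hPi, hQi]
    | smul a P hPs hPi =>
        rw [show ⇑(a • P) = a • ⇑P from rfl]
        simp only [Pi.smul_apply]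
        rw [integral_smul, integral_smul, hPi]
  have hf_int : Integrable (⇑f) (volume : Measure (AddCircle (1:ℝ) × AddCircle (1:ℝ))) :=
    f.continuous.integrable_of_hasCompactSupport (HasCompactSupport.of_compactSpace _)
  have hfpos : 0 < ∫ x, f x ∂(volume : Measure (AddCircle (1:ℝ) × AddCircle (1:ℝ))) := by
    rw [integral_pos_iff_support_of_nonneg (fun x => (hf01 x).1) hf_int]
    have hsub : f ⁻¹' (Set.Ioi (0:ℝ)) ⊆ Function.support f := fun x hx => ne_of_gt hx
    refine lt_of_lt_of_le ?_ (measure_mono hsub)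
    refine (isOpen_Ioi.preimage f.continuous).measure_pos _ ⟨p, ?_⟩
    have : f p = 1 := hf1 rfl
    simp [Set.mem_preimage, this]
  have hFapprox : ∀ ε : ℝ, 0 < ε →
      ‖∫ x, F x ∂(volume : Measure (AddCircle (1:ℝ) × AddCircle (1:ℝ)))‖ ≤ 2 * ε := by
    intro ε hε
    have hFmem : F ∈ closure ((span ℂ (range char) :
        Submodule ℂ C(AddCircle (1:ℝ) × AddCircle (1:ℝ), ℂ)) : Set _) := by
      have h2 : F ∈ (span ℂ (range char)).topologicalClosure := by
        rw [span_char_closure_eq_top]; trivial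
      exact h2
    obtain ⟨P, hPmem, hPdist⟩ := Metric.mem_closure_iff.mp hFmem ε hε
    have hb : ∀ (ν : Measure (AddCircle (1:ℝ) × AddCircle (1:ℝ))), IsProbabilityMeasure ν →
        ‖(∫ x, F x ∂ν) - ∫ x, (P : C(AddCircle (1:ℝ) × AddCircle (1:ℝ), ℂ)) x ∂ν‖ ≤ ε := by
      intro ν hν
      rw [← integral_sub (hint F ν) (hint P ν)]
      have hbound : ∀ x, ‖F x - P x‖ ≤ ε := by
        intro x
        have h1 : ‖(F - P) x‖ ≤ ‖F - P‖ := ContinuousMap.norm_coe_le_norm (F - P) x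
        have h2 : ‖F - P‖ = dist F P := (dist_eq_norm F P).symm
        calc ‖F x - P x‖ = ‖(F - P) x‖ := by rw [ContinuousMap.sub_apply]
          _ ≤ dist F P := by rw [← h2]; exact h1
          _ ≤ ε := le_of_lt hPdist
      have := norm_integral_le_of_norm_le_const (μ := ν)
        (f := fun x => F x - P x) (C := ε) (ae_of_all _ hbound)
      simpa [measure_univ] using this
    have hPeq := hPint P hPmem
    have hdecomp : ∫ x, F x ∂(volume : Measure (AddCircle (1:ℝ) × AddCircle (1:ℝ))) =
        ((∫ x, F x ∂(volume : Measure (AddCircle (1:ℝ) × AddCircle (1:ℝ)))) -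
          ∫ x, (P : C(AddCircle (1:ℝ) × AddCircle (1:ℝ), ℂ)) x
            ∂(volume : Measure (AddCircle (1:ℝ) × AddCircle (1:ℝ))))
        - ((∫ x, F x ∂μ1) - ∫ x, (P : C(AddCircle (1:ℝ) × AddCircle (1:ℝ), ℂ)) x ∂μ1)
        + ∫ x, F x ∂μ1 := by
      rw [hPeq]; ring
    rw [hdecomp, hF1, add_zero]
    refine (norm_sub_le _ _).trans ?_
    have h1 := hb (volume : Measure (AddCircle (1:ℝ) × AddCircle (1:ℝ))) inferInstance
    have h2 := hb μ1 inferInstance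
    rw [hF1] at h2
    linarith
  have hF0 : ∫ x, F x ∂(volume : Measure (AddCircle (1:ℝ) × AddCircle (1:ℝ))) = 0 := by
    by_contra hne
    have hpos : 0 < ‖∫ x, F x ∂(volume : Measure (AddCircle (1:ℝ) × AddCircle (1:ℝ)))‖ :=
      norm_pos_iff.mpr hne
    have := hFapprox (‖∫ x, F x ∂(volume : Measure (AddCircle (1:ℝ) × AddCircle (1:ℝ)))‖ / 4)
      (by positivity)
    linarith
  have hreal : ∫ x, F x ∂(volume : Measure (AddCircle (1:ℝ) × AddCircle (1:ℝ))) =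
      ((∫ x, f x ∂(volume : Measure (AddCircle (1:ℝ) × AddCircle (1:ℝ))) : ℝ) : ℂ) :=
    integral_ofReal
  rw [hreal] at hF0
  rw [Complex.ofReal_eq_zero] at hF0
  linarith



open Set
open scoped Real


lemma sfrac_add_int (x : ℝ) (m : ℤ) : sfrac (x + m) = sfrac x := by
  simp [sfrac, round_add_intCast]

lemma round_eq_zero_of_abs_lt {x : ℝ} (h : |x| < 1/2) : round x = 0 := by
  rw [round_eq, Int.floor_eq_zero_iff]
  rw [abs_lt] at h
  constructor
  · simp; linarith
  · simp; linarith

lemma sfrac_eq_self {x : ℝ} (h : |x| < 1/2) : sfrac x = x := by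
  simp [sfrac, round_eq_zero_of_abs_lt h]

lemma norm_coe_eq_abs_sfrac (y : ℝ) : ‖((y : ℝ) : AddCircle (1:ℝ))‖ = |sfrac y| := by
  rw [AddCircle.norm_eq]
  simp [sfrac]

lemma rel_lemma (α : ℝ) (hind : LinearIndependent ℚ ![(1 : ℝ), α, α ^ 2])
    (a b c d : ℤ) (hd : d ≠ 0) (hcd : (c : ℝ) + α * d ≠ 0)
    (θ : ℝ) (hθ : θ = ((a : ℝ) + α * b) / ((c : ℝ) + α * d))
    (hθirr : Irrational θ) :
    ∀ m n p : ℤ, (m:ℝ) * α + (n:ℝ) * θ = (p:ℝ) → m = 0 ∧ n = 0 := by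
  intro m n p h
  have hθc : θ * ((c:ℝ) + α * d) = (a:ℝ) + α * b := by
    rw [hθ]; field_simp
  have hexp : (n:ℝ)*a - (p:ℝ)*c + ((m:ℝ)*c + (n:ℝ)*b - (p:ℝ)*d) * α
      + ((m:ℝ)*d) * α^2 = 0 := by
    linear_combination ((c:ℝ) + α * d) * h - (n:ℝ) * hθc
  have h3 := Fintype.linearIndependent_iff.mp hind
    ![((n*a - p*c : ℤ):ℚ), ((m*c + n*b - p*d : ℤ):ℚ), ((m*d : ℤ):ℚ)] ?_
  · have hmd : ((m*d : ℤ):ℚ) = 0 := h3 2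
    have hmd' : m * d = 0 := by exact_mod_cast hmd
    have hm : m = 0 := by
      rcases mul_eq_zero.mp hmd' with h' | h'
      · exact h'
      · exact absurd h' hd
    refine ⟨hm, ?_⟩
    subst hm
    simp only [Int.cast_zero, zero_mul, zero_add] at h
    by_contra hn
    apply hθirr
    refine ⟨(p:ℚ)/(n:ℚ), ?_⟩
    have hn' : (n:ℝ) ≠ 0 := Int.cast_ne_zero.mpr hn
    push_cast
    field_simp
    linarith [h]
  · simp only [Fin.sum_univ_three]
    simp only [Matrix.cons_val_zero, Matrix.cons_val_one, Matrix.head_cons,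
      Matrix.cons_val_two, Matrix.tail_cons]
    have hs : ∀ (q : ℚ) (r : ℝ), q • r = (q:ℝ) * r := fun q r => Rat.smul_def q r
    rw [hs, hs, hs]
    push_cast
    linear_combination hexp



open Set
open scoped Real

theorem interior_mem (α : ℝ) (hind : LinearIndependent ℚ ![(1 : ℝ), α, α ^ 2])
    (a b c d : ℤ) (hd : d ≠ 0) (hcd : (c : ℝ) + α * d ≠ 0)
    (θ : ℝ) (hθ : θ = ((a : ℝ) + α * b) / ((c : ℝ) + α * d))
    (hθirr : Irrational θ) :
    ((0 : ℝ), (0 : ℝ)) ∈ interior (closure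
      {p : ℝ × ℝ | ∃ n : ℤ, p = (sfrac (α * n), sfrac (α * round (θ * n)))}) := by
  have hrel := rel_lemma α hind a b c d hd hcd θ hθ hθirr
  have hdense := dense_torus_orbit α θ hrel
  have hθc : θ * ((c:ℝ) + α * d) = (a:ℝ) + α * b := by
    rw [hθ]; field_simp
  have hident : α * θ * d = (a:ℝ) + (b:ℝ) * α - (c:ℝ) * θ := by
    linear_combination hθc
  set S : Set (ℝ × ℝ) :=
    {p : ℝ × ℝ | ∃ n : ℤ, p = (sfrac (α * n), sfrac (α * round (θ * n)))} with hS
  set K : ℝ := |(d:ℝ)| + |(b:ℝ)| + |(c:ℝ) + α * d| with hKdef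
  have hK0 : 0 ≤ K := by positivity
  have hdK : |(d:ℝ)| ≤ K := by
    have h1 : (0:ℝ) ≤ |(b:ℝ)| := abs_nonneg _
    have h2 : (0:ℝ) ≤ |(c:ℝ) + α * d| := abs_nonneg _
    rw [hKdef]; linarith
  have hbcK : |(b:ℝ)| + |(c:ℝ) + α * d| ≤ K := by
    have h1 : (0:ℝ) ≤ |(d:ℝ)| := abs_nonneg _
    rw [hKdef]; linarith
  set δ : ℝ := 1 / (4 * (K + 1)) with hδdef
  have hδ0 : 0 < δ := by rw [hδdef]; positivity
  have h2δK : 2 * δ * K < 1 / 2 := by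
    have heq : 2 * δ * K = K / (2 * (K + 1)) := by
      rw [hδdef]; field_simp; ring
    rw [heq, div_lt_iff₀ (by linarith)]
    linarith
  have hmain : ∀ x t : ℝ, |x| < δ → |t| < δ →
      (((d:ℝ) * x, (b:ℝ) * x - ((c:ℝ) + α * d) * t) : ℝ × ℝ) ∈ closure S := by
    intro x t hx ht
    rw [Metric.mem_closure_iff]
    intro ε hε
    set η : ℝ := min δ (ε / (2 * (K + 1))) with hηdef
    have hη0 : 0 < η := lt_min hδ0 (by positivity)
    have hηδ : η ≤ δ := min_le_left _ _
    have hηε : η ≤ ε / (2 * (K + 1)) := min_le_right _ _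
    obtain ⟨z, hzball, hzmem⟩ :=
      Metric.dense_iff.mp hdense (((x : AddCircle (1:ℝ)), (t : AddCircle (1:ℝ)))) η hη0
    obtain ⟨k, hk⟩ := AddSubgroup.mem_zmultiples_iff.mp hzmem
    rw [← hk] at hzball
    rw [Metric.mem_ball, Prod.dist_eq, max_lt_iff] at hzball
    obtain ⟨hd1, hd2⟩ := hzball
    have hcoe1 : (k • ((α : AddCircle (1:ℝ)), (θ : AddCircle (1:ℝ)))).1
        = (((k:ℝ) * α : ℝ) : AddCircle (1:ℝ)) := by
      rw [Prod.smul_fst, ← QuotientAddGroup.mk_zsmul, zsmul_eq_mul]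
    have hcoe2 : (k • ((α : AddCircle (1:ℝ)), (θ : AddCircle (1:ℝ)))).2
        = (((k:ℝ) * θ : ℝ) : AddCircle (1:ℝ)) := by
      rw [Prod.smul_snd, ← QuotientAddGroup.mk_zsmul, zsmul_eq_mul]
    rw [hcoe1] at hd1
    rw [hcoe2] at hd2
    have habs1 : |sfrac ((k:ℝ) * α - x)| < η := by
      rw [dist_eq_norm, ← QuotientAddGroup.mk_sub, norm_coe_eq_abs_sfrac] at hd1
      exact hd1
    have habs2 : |sfrac ((k:ℝ) * θ - t)| < η := by
      rw [dist_eq_norm, ← QuotientAddGroup.mk_sub, norm_coe_eq_abs_sfrac] at hd2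
      exact hd2
    set e1 : ℝ := sfrac ((k:ℝ) * α - x) with he1
    set e2 : ℝ := sfrac ((k:ℝ) * θ - t) with he2
    set M : ℤ := round ((k:ℝ) * α - x) with hM
    set R : ℤ := round ((k:ℝ) * θ - t) with hR
    have hkα : (k:ℝ) * α = (x + e1) + (M:ℝ) := by
      rw [he1, hM]; simp [sfrac]; ring
    have hkθ : (k:ℝ) * θ = (t + e2) + (R:ℝ) := by
      rw [he2, hR]; simp [sfrac]; ring
    set x' : ℝ := x + e1 with hx'
    set t' : ℝ := t + e2 with ht'
    have hx'b : |x'| < 2 * δ := by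
      calc |x'| ≤ |x| + |e1| := abs_add_le _ _
        _ < δ + η := add_lt_add hx habs1
        _ ≤ 2 * δ := by linarith
    have ht'b : |t'| < 2 * δ := by
      calc |t'| ≤ |t| + |e2| := abs_add_le _ _
        _ < δ + η := add_lt_add ht habs2
        _ ≤ 2 * δ := by linarith
    -- Claim A
    have hAeq : α * ((d * k : ℤ) : ℝ) = (d:ℝ) * x' + ((d * M : ℤ) : ℝ) := by
      push_cast
      linear_combination (d:ℝ) * hkα
    have hdx'lt : |(d:ℝ) * x'| < 1/2 := by
      rw [abs_mul]
      calc |(d:ℝ)| * |x'| ≤ K * |x'| := mul_le_mul_of_nonneg_right hdK (abs_nonneg _)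
        _ ≤ K * (2 * δ) := mul_le_mul_of_nonneg_left (le_of_lt hx'b) hK0
        _ = 2 * δ * K := by ring
        _ < 1/2 := h2δK
    have hA : sfrac (α * ((d * k : ℤ) : ℝ)) = (d:ℝ) * x' := by
      rw [hAeq, sfrac_add_int, sfrac_eq_self hdx'lt]
    -- Claim B
    have hBeq : θ * ((d * k : ℤ) : ℝ) = (d:ℝ) * t' + ((d * R : ℤ) : ℝ) := by
      push_cast
      linear_combination (d:ℝ) * hkθ
    have hdt'lt : |(d:ℝ) * t'| < 1/2 := by
      rw [abs_mul]
      calc |(d:ℝ)| * |t'| ≤ K * |t'| := mul_le_mul_of_nonneg_right hdK (abs_nonneg _)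
        _ ≤ K * (2 * δ) := mul_le_mul_of_nonneg_left (le_of_lt ht'b) hK0
        _ = 2 * δ * K := by ring
        _ < 1/2 := h2δK
    have hB : round (θ * ((d * k : ℤ) : ℝ)) = d * R := by
      rw [hBeq, round_add_intCast, round_eq_zero_of_abs_lt hdt'lt, zero_add]
    -- Claim C
    have hCeq : α * ((d * R : ℤ) : ℝ)
        = ((b:ℝ) * x' - ((c:ℝ) + α * d) * t') + ((a * k + b * M - c * R : ℤ) : ℝ) := by
      push_cast
      linear_combination (k:ℝ) * hident - ((c:ℝ) + α * d) * hkθ + (b:ℝ) * hkα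
    have hbx'lt : |(b:ℝ) * x' - ((c:ℝ) + α * d) * t'| < 1/2 := by
      calc |(b:ℝ) * x' - ((c:ℝ) + α * d) * t'|
          ≤ |(b:ℝ) * x'| + |((c:ℝ) + α * d) * t'| := abs_sub _ _
        _ = |(b:ℝ)| * |x'| + |(c:ℝ) + α * d| * |t'| := by rw [abs_mul, abs_mul]
        _ ≤ |(b:ℝ)| * (2 * δ) + |(c:ℝ) + α * d| * (2 * δ) := by
            apply add_le_add
            · exact mul_le_mul_of_nonneg_left (le_of_lt hx'b) (abs_nonneg _)
            · exact mul_le_mul_of_nonneg_left (le_of_lt ht'b) (abs_nonneg _)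
        _ = (|(b:ℝ)| + |(c:ℝ) + α * d|) * (2 * δ) := by ring
        _ ≤ K * (2 * δ) := mul_le_mul_of_nonneg_right hbcK (by linarith)
        _ = 2 * δ * K := by ring
        _ < 1/2 := h2δK
    have hC : sfrac (α * ((d * R : ℤ) : ℝ)) = (b:ℝ) * x' - ((c:ℝ) + α * d) * t' := by
      rw [hCeq, sfrac_add_int, sfrac_eq_self hbx'lt]
    -- the witness
    refine ⟨(sfrac (α * ((d * k : ℤ) : ℝ)),
      sfrac (α * ((round (θ * ((d * k : ℤ) : ℝ)) : ℤ) : ℝ))), ⟨d * k, rfl⟩, ?_⟩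
    rw [hB, hA, hC]
    rw [Prod.dist_eq, max_lt_iff]
    have hKη : K * η < ε := by
      have h1 : K * η ≤ K * (ε / (2 * (K + 1))) := mul_le_mul_of_nonneg_left hηε hK0
      have h2 : K * (ε / (2 * (K + 1))) < ε := by
        have h3 : K / (2 * (K + 1)) < 1 := by
          rw [div_lt_one (by linarith)]; linarith
        calc K * (ε / (2 * (K + 1))) = (K / (2 * (K + 1))) * ε := by ring
          _ < 1 * ε := mul_lt_mul_of_pos_right h3 hε
          _ = ε := one_mul ε
      exact lt_of_le_of_lt h1 h2
    constructor
    · rw [Real.dist_eq]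
      have heq : (d:ℝ) * x - (d:ℝ) * x' = -((d:ℝ) * e1) := by rw [hx']; ring
      rw [heq, abs_neg, abs_mul]
      calc |(d:ℝ)| * |e1| ≤ K * |e1| := mul_le_mul_of_nonneg_right hdK (abs_nonneg _)
        _ ≤ K * η := mul_le_mul_of_nonneg_left (le_of_lt habs1) hK0
        _ < ε := hKη
    · rw [Real.dist_eq]
      have heq : ((b:ℝ) * x - ((c:ℝ) + α * d) * t) - ((b:ℝ) * x' - ((c:ℝ) + α * d) * t')
          = -((b:ℝ) * e1) + ((c:ℝ) + α * d) * e2 := by rw [hx', ht']; ring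
      rw [heq]
      calc |-((b:ℝ) * e1) + ((c:ℝ) + α * d) * e2|
          ≤ |-((b:ℝ) * e1)| + |((c:ℝ) + α * d) * e2| := abs_add_le _ _
        _ = |(b:ℝ)| * |e1| + |(c:ℝ) + α * d| * |e2| := by rw [abs_neg, abs_mul, abs_mul]
        _ ≤ |(b:ℝ)| * η + |(c:ℝ) + α * d| * η := by
            apply add_le_add
            · exact mul_le_mul_of_nonneg_left (le_of_lt habs1) (abs_nonneg _)
            · exact mul_le_mul_of_nonneg_left (le_of_lt habs2) (abs_nonneg _)
        _ = (|(b:ℝ)| + |(c:ℝ) + α * d|) * η := by ring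
        _ ≤ K * η := mul_le_mul_of_nonneg_right hbcK (le_of_lt hη0)
        _ < ε := hKη
  -- conclude via an explicit open set
  have hd' : (d:ℝ) ≠ 0 := Int.cast_ne_zero.mpr hd
  set U : Set (ℝ × ℝ) := {q : ℝ × ℝ | |q.1 / (d:ℝ)| < δ ∧
    |((b:ℝ) * (q.1 / (d:ℝ)) - q.2) / ((c:ℝ) + α * d)| < δ} with hU
  have hUopen : IsOpen U := by
    have hc1 : Continuous fun q : ℝ × ℝ => |q.1 / (d:ℝ)| :=
      (continuous_fst.div_const _).abs
    have hc2 : Continuous fun q : ℝ × ℝ =>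
        |((b:ℝ) * (q.1 / (d:ℝ)) - q.2) / ((c:ℝ) + α * d)| :=
      (((continuous_const.mul (continuous_fst.div_const _)).sub continuous_snd).div_const _).abs
    have : U = {q : ℝ × ℝ | |q.1 / (d:ℝ)| < δ} ∩
        {q : ℝ × ℝ | |((b:ℝ) * (q.1 / (d:ℝ)) - q.2) / ((c:ℝ) + α * d)| < δ} := rfl
    rw [this]
    exact (isOpen_lt hc1 continuous_const).inter (isOpen_lt hc2 continuous_const)
  have hU0 : ((0:ℝ), (0:ℝ)) ∈ U := by
    constructor
    · simp [hδ0]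
    · simp [hδ0]
  have hUsub : U ⊆ closure S := by
    rintro ⟨u, v⟩ ⟨h1, h2⟩
    have hx := hmain (u / (d:ℝ)) (((b:ℝ) * (u / (d:ℝ)) - v) / ((c:ℝ) + α * d)) h1 h2
    have heq : (((d:ℝ) * (u / (d:ℝ)),
        (b:ℝ) * (u / (d:ℝ)) - ((c:ℝ) + α * d) *
          (((b:ℝ) * (u / (d:ℝ)) - v) / ((c:ℝ) + α * d))) : ℝ × ℝ) = (u, v) := by
      rw [Prod.ext_iff]
      constructor
      · field_simp
      · dsimp only
        rw [mul_div_assoc' ((c:ℝ) + α * d), mul_div_cancel_left₀ _ hcd]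
        ring
    rw [heq] at hx
    exact hx
  exact mem_interior.mpr ⟨U, hUsub, hUopen, hU0⟩


end Stmt8
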